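/- Let X be a discrete random vector taking values in a countable set 𝒳 ⊆ [0,∞)^N, and let (X,Y) be jointly distributed with 0 ≤ Yᵢ ≤ Xᵢ a.s. for each coordinate i. Define Ŷ coordinatewise by Ŷᵢ = min{x ∈ 𝒳ᵢ : x ≥ Yᵢ}, where 𝒳ᵢ is the i-th coordinate projection of 𝒳 (assumed closed under this minimum). Then Ŷ satisfies 0 ≤ Ŷᵢ ≤ Xᵢ a.s., E[Σᵢ (Xᵢ − Ŷᵢ)] ≤ E[Σᵢ (Xᵢ − Yᵢ)], and I(X; Ŷ) ≤ I(X; Y). -/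

import Mathlib

open MeasureTheory
open scoped Classical

/-- Kullback–Leibler divergence (in nats), `+∞` unless `μ ≪ ν` and the
log-likelihood ratio is integrable. -/
noncomputable def klDiv {α : Type*} [MeasurableSpace α] (μ ν : Measure α) : ENNReal :=
  if μ ≪ ν ∧ Integrable (llr μ ν) μ then ENNReal.ofReal (∫ x, llr μ ν x ∂μ) else ⊤

/-- Mutual information `I(X;Y)` as KL divergence between joint and product of marginals. -/
noncomputable def mutualInfo {Ω α β : Type*} [MeasurableSpace Ω] [MeasurableSpace α]
    [MeasurableSpace β] (μ : Measure Ω) (X : Ω → α) (Y : Ω → β) : ENNReal :=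
  klDiv (μ.map (fun ω => (X ω, Y ω))) ((μ.map X).prod (μ.map Y))

/-- Coordinatewise rounding-up map: `roundFun T t` is the least element of `T` that is
`≥ t` when such an element exists, and `t` otherwise. -/
noncomputable def roundFun (T : Set ℝ) : ℝ → ℝ :=
  fun t => if (T ∩ Set.Ici t).Nonempty then sInf (T ∩ Set.Ici t) else t

lemma roundFun_mono (T : Set ℝ) : Monotone (roundFun T) := by
  intro t t' htt'
  have hbdd : ∀ s : ℝ, BddBelow (T ∩ Set.Ici s) := fun s => ⟨s, fun x hx => hx.2⟩
  by_cases h' : (T ∩ Set.Ici t').Nonempty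
  · have hsub : T ∩ Set.Ici t' ⊆ T ∩ Set.Ici t :=
      Set.inter_subset_inter_right T (Set.Ici_subset_Ici.2 htt')
    have h : (T ∩ Set.Ici t).Nonempty := h'.mono hsub
    simp only [roundFun]
    rw [if_pos h, if_pos h']
    exact csInf_le_csInf (hbdd t) h' hsub
  · simp only [roundFun]
    rw [if_neg h']
    by_cases h : (T ∩ Set.Ici t).Nonempty
    · rw [if_pos h]
      obtain ⟨x, hxm⟩ := h
      have hxt' : x < t' := by
        by_contra hle
        exact h' ⟨x, hxm.1, le_of_not_gt hle⟩
      exact le_trans (csInf_le (hbdd t) hxm) hxt'.le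
    · rw [if_neg h]; exact htt'

/-- Data-processing inequality for the Kullback–Leibler divergence under a deterministic
(measurable) map. -/
lemma klDiv_map_le {α β : Type*} [MeasurableSpace α] [MeasurableSpace β]
    (μ ν : Measure α) [IsProbabilityMeasure μ] [IsProbabilityMeasure ν]
    {g : α → β} (hg : Measurable g) :
    klDiv (μ.map g) (ν.map g) ≤ klDiv μ ν := by
  by_cases hc : μ ≪ ν ∧ Integrable (llr μ ν) μ
  swap
  · have : klDiv μ ν = ⊤ := by rw [klDiv, if_neg hc]
    rw [this]; exact le_top
  obtain ⟨hμν, hA⟩ := hc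
  set p := μ.map g with hp_def
  set q := ν.map g with hq_def
  haveI hp : IsProbabilityMeasure p := Measure.isProbabilityMeasure_map hg.aemeasurable
  haveI hq : IsProbabilityMeasure q := Measure.isProbabilityMeasure_map hg.aemeasurable
  have hpq : p ≪ q := hμν.map hg
  set A := llr μ ν with hA_def
  set B := fun a => llr p q (g a) with hB_def
  have hAmeas : Measurable A := measurable_llr μ ν
  have hBmeas : Measurable B := (measurable_llr p q).comp hg
  -- a.e. positivity/finiteness facts
  have hρ₂ : ∀ᵐ a ∂μ, 0 < p.rnDeriv q (g a) ∧ p.rnDeriv q (g a) < ⊤ := by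
    have hb : ∀ᵐ b ∂(μ.map g), 0 < p.rnDeriv q b ∧ p.rnDeriv q b < ⊤ := by
      filter_upwards [Measure.rnDeriv_pos hpq, hpq.ae_le (Measure.rnDeriv_lt_top p q)]
        with b h1 h2 using ⟨h1, h2⟩
    exact ae_of_ae_map hg.aemeasurable hb
  have hexpB : ∀ᵐ a ∂μ, Real.exp (B a) = (p.rnDeriv q (g a)).toReal := by
    filter_upwards [hρ₂] with a ha
    have : 0 < (p.rnDeriv q (g a)).toReal := ENNReal.toReal_pos ha.1.ne' ha.2.ne
    exact Real.exp_log this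
  have hexpnegA : ∀ᵐ a ∂μ, Real.exp (-A a) = (ν.rnDeriv μ a).toReal :=
    exp_neg_llr hμν
  -- the function E = exp (B - A)
  set E := fun a => Real.exp (B a - A a) with hE_def
  have hEmeas : Measurable E := (hBmeas.sub hAmeas).exp
  have hEeq : ∀ᵐ a ∂μ, E a = (p.rnDeriv q (g a)).toReal * (ν.rnDeriv μ a).toReal := by
    filter_upwards [hexpB, hexpnegA] with a h1 h2
    rw [hE_def]
    simp only [sub_eq_add_neg, Real.exp_add, h1, h2]
  have hElint : ∫⁻ a, ENNReal.ofReal (E a) ∂μ ≤ 1 := by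
    have h1 : ∫⁻ a, ENNReal.ofReal (E a) ∂μ
        = ∫⁻ a, p.rnDeriv q (g a) * ν.rnDeriv μ a ∂μ := by
      refine lintegral_congr_ae ?_
      filter_upwards [hEeq, hρ₂, Measure.rnDeriv_lt_top ν μ] with a h1 h2 h3
      rw [h1, ENNReal.ofReal_mul ENNReal.toReal_nonneg, ENNReal.ofReal_toReal h2.2.ne,
        ENNReal.ofReal_toReal h3.ne]
    have h2 := lintegral_withDensity_eq_lintegral_mul μ (Measure.measurable_rnDeriv ν μ)
      ((Measure.measurable_rnDeriv p q).comp hg)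
    simp only [Function.comp, Pi.mul_apply] at h2
    calc ∫⁻ a, ENNReal.ofReal (E a) ∂μ
        = ∫⁻ a, p.rnDeriv q (g a) * ν.rnDeriv μ a ∂μ := h1
      _ = ∫⁻ a, ν.rnDeriv μ a * p.rnDeriv q (g a) ∂μ :=
          lintegral_congr fun a => mul_comm _ _
      _ = ∫⁻ a, p.rnDeriv q (g a) ∂(μ.withDensity (ν.rnDeriv μ)) := h2.symm
      _ ≤ ∫⁻ a, p.rnDeriv q (g a) ∂ν :=
          lintegral_mono' (Measure.withDensity_rnDeriv_le ν μ) le_rfl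
      _ = ∫⁻ b, p.rnDeriv q b ∂q :=
          (lintegral_map (Measure.measurable_rnDeriv p q) hg).symm
      _ = p Set.univ := Measure.lintegral_rnDeriv hpq
      _ = 1 := by simp
  have hEnonneg : ∀ a, 0 ≤ E a := fun a => (Real.exp_pos _).le
  have hEint : Integrable E μ := by
    refine ⟨hEmeas.aestronglyMeasurable, ?_⟩
    rw [hasFiniteIntegral_iff_ofReal (Filter.Eventually.of_forall hEnonneg)]
    exact lt_of_le_of_lt hElint ENNReal.one_lt_top
  have hEintle : ∫ a, E a ∂μ ≤ 1 := by
    rw [integral_eq_lintegral_of_nonneg_ae (Filter.Eventually.of_forall hEnonneg)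
      hEmeas.aestronglyMeasurable]
    have := ENNReal.toReal_mono (by simp) hElint
    simpa using this
  -- key pointwise inequality : 1 - E a ≤ A a - B a
  have hkey : ∀ a, 1 - E a ≤ A a - B a := by
    intro a
    have := Real.add_one_le_exp (B a - A a)
    rw [hE_def]
    linarith
  -- control of the negative part of B
  have hD : Integrable (fun a => (q.rnDeriv p (g a)).toReal) μ := by
    rw [show (fun a => (q.rnDeriv p (g a)).toReal)
        = (fun b => (q.rnDeriv p b).toReal) ∘ g from rfl,
      ← integrable_map_measure (Measure.measurable_rnDeriv q p).ennreal_toReal.aestronglyMeasurable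
        hg.aemeasurable]
    exact Measure.integrable_toReal_rnDeriv
  have hBneg : ∀ᵐ a ∂μ, -B a ≤ (q.rnDeriv p (g a)).toReal := by
    have hb : ∀ᵐ b ∂(μ.map g), -llr p q b ≤ (q.rnDeriv p b).toReal := by
      filter_upwards [neg_llr hpq] with b hb
      rw [show -llr p q b = (-llr p q) b from rfl, hb]
      exact Real.log_le_self ENNReal.toReal_nonneg
    exact ae_of_ae_map hg.aemeasurable hb
  -- B is integrable
  have hDnonneg : ∀ a, (0:ℝ) ≤ (q.rnDeriv p (g a)).toReal := fun a => ENNReal.toReal_nonneg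
  have hBint : Integrable B μ := by
    refine Integrable.mono' ((hA.abs.add hEint).add hD) hBmeas.aestronglyMeasurable ?_
    filter_upwards [hBneg] with a ha
    simp only [Pi.add_apply]
    rw [Real.norm_eq_abs, abs_le]
    constructor
    · have h1 := hkey a
      have h2 := hEnonneg a
      have : -((q.rnDeriv p (g a)).toReal) ≤ B a := by linarith
      have h3 : (0:ℝ) ≤ |A a| := abs_nonneg _
      linarith
    · have h1 := hkey a
      have h2 : A a ≤ |A a| := le_abs_self _
      have h3 := hDnonneg a
      linarith
  -- the integral inequality
  have hint_le : ∫ a, B a ∂μ ≤ ∫ a, A a ∂μ := by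
    have h1 : ∫ a, (1 - E a) ∂μ ≤ ∫ a, (A a - B a) ∂μ :=
      integral_mono ((integrable_const 1).sub hEint) (hA.sub hBint)
        (fun a => hkey a)
    rw [integral_sub (integrable_const 1) hEint, integral_sub hA hBint] at h1
    simp only [integral_const, probReal_univ, ENNReal.toReal_one, smul_eq_mul, one_mul] at h1
    linarith
  -- conclude
  have hBint' : Integrable (llr p q) p := by
    rw [hp_def, integrable_map_measure (stronglyMeasurable_llr p q).aestronglyMeasurable
      hg.aemeasurable]
    exact hBint
  have hint_eq : ∫ b, llr p q b ∂p = ∫ a, B a ∂μ := by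
    rw [hp_def]
    exact integral_map hg.aemeasurable (stronglyMeasurable_llr p q).aestronglyMeasurable
  rw [klDiv, klDiv, if_pos ⟨hpq, hBint'⟩, if_pos ⟨hμν, hA⟩]
  exact ENNReal.ofReal_le_ofReal (by rw [hint_eq]; exact hint_le)

theorem output_alphabet_restriction
    {Ω : Type*} [MeasurableSpace Ω] (μ : Measure Ω) [IsProbabilityMeasure μ]
    (N : ℕ) (X Y Yhat : Ω → Fin N → ℝ)
    (hX : Measurable X) (hY : Measurable Y) (hYhatMeas : Measurable Yhat)
    (S : Set (Fin N → ℝ)) (hScount : S.Countable) (hSpos : ∀ v ∈ S, ∀ i, 0 ≤ v i)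
    (hXS : ∀ᵐ ω ∂μ, X ω ∈ S)
    (hYpos : ∀ᵐ ω ∂μ, ∀ i, 0 ≤ Y ω i)
    (hYX : ∀ᵐ ω ∂μ, ∀ i, Y ω i ≤ X ω i)
    -- Ŷᵢ is the minimum of {x ∈ 𝒳ᵢ : Yᵢ ≤ x}, where 𝒳ᵢ = {v i : v ∈ S}
    (hYhat : ∀ᵐ ω ∂μ, ∀ i,
      IsLeast {x | x ∈ (fun v : Fin N → ℝ => v i) '' S ∧ Y ω i ≤ x} (Yhat ω i)) :
    (∀ᵐ ω ∂μ, ∀ i, 0 ≤ Yhat ω i ∧ Yhat ω i ≤ X ω i)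
    ∧ (∫⁻ ω, ENNReal.ofReal (∑ i, (X ω i - Yhat ω i)) ∂μ
        ≤ ∫⁻ ω, ENNReal.ofReal (∑ i, (X ω i - Y ω i)) ∂μ)
    ∧ mutualInfo μ X Yhat ≤ mutualInfo μ X Y := by
  -- Part 1
  have part1 : ∀ᵐ ω ∂μ, ∀ i, 0 ≤ Yhat ω i ∧ Yhat ω i ≤ X ω i := by
    filter_upwards [hYhat, hXS, hYX] with ω hl hXSω hYXω i
    constructor
    · obtain ⟨⟨v, hv, hvi⟩, -⟩ := (hl i).1
      exact hvi ▸ hSpos v hv i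
    · exact (hl i).2 ⟨⟨X ω, hXSω, rfl⟩, hYXω i⟩
  refine ⟨part1, ?_, ?_⟩
  -- Part 2
  · refine lintegral_mono_ae ?_
    filter_upwards [hYhat] with ω hl
    refine ENNReal.ofReal_le_ofReal (Finset.sum_le_sum fun i _ => ?_)
    exact sub_le_sub_left (hl i).1.2 _
  -- Part 3
  · set F : (Fin N → ℝ) → (Fin N → ℝ) :=
      fun y i => roundFun ((fun v : Fin N → ℝ => v i) '' S) (y i) with hF_def
    have hFmeas : Measurable F :=
      measurable_pi_lambda F fun i =>
        (roundFun_mono _).measurable.comp (measurable_pi_apply i)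
    have hae : ∀ᵐ ω ∂μ, Yhat ω = F (Y ω) := by
      filter_upwards [hYhat] with ω hl
      funext i
      have hset : {x | x ∈ (fun v : Fin N → ℝ => v i) '' S ∧ Y ω i ≤ x}
          = (fun v : Fin N → ℝ => v i) '' S ∩ Set.Ici (Y ω i) := rfl
      have hl' : IsLeast ((fun v : Fin N → ℝ => v i) '' S ∩ Set.Ici (Y ω i)) (Yhat ω i) :=
        hset ▸ hl i
      have hne : ((fun v : Fin N → ℝ => v i) '' S ∩ Set.Ici (Y ω i)).Nonempty :=
        ⟨Yhat ω i, hl'.1⟩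
      rw [hF_def]
      simp only [roundFun, if_pos hne]
      exact (hl'.csInf_eq).symm
    -- instances
    haveI h1 : IsProbabilityMeasure (μ.map (fun ω => (X ω, Y ω))) :=
      Measure.isProbabilityMeasure_map (hX.prodMk hY).aemeasurable
    haveI h2 : IsProbabilityMeasure (μ.map X) := Measure.isProbabilityMeasure_map hX.aemeasurable
    haveI h3 : IsProbabilityMeasure (μ.map Y) := Measure.isProbabilityMeasure_map hY.aemeasurable
    haveI h4 : IsProbabilityMeasure ((μ.map X).prod (μ.map Y)) := by infer_instance
    have hg : Measurable (Prod.map (id : (Fin N → ℝ) → (Fin N → ℝ)) F) :=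
      measurable_id.prodMap hFmeas
    have key := klDiv_map_le (μ.map (fun ω => (X ω, Y ω))) ((μ.map X).prod (μ.map Y)) hg
    have e1 : (μ.map (fun ω => (X ω, Y ω))).map (Prod.map id F)
        = μ.map (fun ω => (X ω, Yhat ω)) := by
      rw [Measure.map_map hg (hX.prodMk hY)]
      refine Measure.map_congr ?_
      filter_upwards [hae] with ω hω
      simp [Prod.map, hω]
    have e2 : ((μ.map X).prod (μ.map Y)).map (Prod.map id F)
        = (μ.map X).prod (μ.map Yhat) := by
      rw [← Measure.map_prod_map _ _ measurable_id hFmeas, Measure.map_id,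
        Measure.map_map hFmeas hY]
      congr 1
      refine Measure.map_congr ?_
      filter_upwards [hae] with ω hω
      exact hω.symm
    rw [e1, e2] at key
    exact key
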